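/- If in the space Σ_m of marked groups on m generators a sequence (Γ_n, S_n) of sofic marked groups converges (in the Gromov–Hausdorff topology on marked groups) to (Γ, S), then Γ is sofic. -/
import Mathlib


/-- The number of fixed points of a permutation of a finite type. -/
def fixCount {X : Type*} [Fintype X] [DecidableEq X] (α : Equiv.Perm X) : ℕ :=
  (Finset.univ.filter fun x => α x = x).card

/-- A group `Γ` is sofic (Definition of Elek–Szabó). -/
def IsSofic (Γ : Type*) [Group Γ] : Prop :=
  ∀ (F : Finset Γ) (ε : ℝ), 0 < ε → ε < 1 →
    ∃ (n : ℕ), 0 < n ∧ ∃ φ : Γ → Equiv.Perm (Fin n),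
      φ 1 = 1 ∧
      (∀ e ∈ F, ∀ f ∈ F,
        (1 - ε) * n ≤ (fixCount (φ e * φ f * (φ (e * f))⁻¹) : ℝ)) ∧
      (∀ e ∈ F, e ≠ 1 → (fixCount (φ e) : ℝ) ≤ ε * n)

open scoped Pointwise

/-- If a sequence of sofic marked groups `(Γₙ, Sₙ)` converges to `(Γ, S)` in the space
`Σ_m` of marked groups, then `Γ` is sofic.  Convergence is used through its consequence:
for every finite subset `F ⊆ Γ` there are an index `k` and a map `t_F : Γ → Γ_k`,
injective on `F`, with `t_F(ab) = t_F(a)·t_F(b)` whenever `a, b, ab ∈ F`. -/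
theorem limit_of_sofic_marked_groups_is_sofic
    {Γ : Type u} [Group Γ] (G : ℕ → Type u) [∀ n, Group (G n)]
    (hsofic : ∀ n, IsSofic (G n))
    (hlim : ∀ F : Finset Γ, ∃ (k : ℕ) (t : Γ → G k),
      Set.InjOn t (F : Set Γ) ∧
      ∀ a ∈ F, ∀ b ∈ F, a * b ∈ F → t (a * b) = t a * t b) :
    IsSofic Γ := by
  classical
  intro F ε hε hε1
  set F' : Finset Γ := insert 1 (F ∪ F * F) with hF'
  obtain ⟨k, t, hinj, hmul⟩ := hlim F'
  have h1 : (1 : Γ) ∈ F' := Finset.mem_insert_self _ _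
  have ht1 : t 1 = 1 := by
    have h := hmul 1 h1 1 h1 (by simpa using h1)
    rw [mul_one] at h
    exact (left_eq_mul.mp h)
  obtain ⟨n, hn, φ, hφ1, hφm, hφf⟩ := hsofic k (F'.image t) ε hε hε1
  refine ⟨n, hn, φ ∘ t, ?_, ?_, ?_⟩
  · simp [ht1, hφ1]
  · intro e he f hf
    have he' : e ∈ F' := Finset.mem_insert_of_mem (Finset.mem_union_left _ he)
    have hf' : f ∈ F' := Finset.mem_insert_of_mem (Finset.mem_union_left _ hf)
    have hef' : e * f ∈ F' :=
      Finset.mem_insert_of_mem (Finset.mem_union_right _ (Finset.mul_mem_mul he hf))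
    have := hφm (t e) (Finset.mem_image_of_mem t he') (t f) (Finset.mem_image_of_mem t hf')
    simpa [Function.comp, hmul e he' f hf' hef'] using this
  · intro e he hne
    have he' : e ∈ F' := Finset.mem_insert_of_mem (Finset.mem_union_left _ he)
    have hte : t e ≠ 1 := by
      intro h
      exact hne (hinj (by exact_mod_cast he') (by exact_mod_cast h1) (h.trans ht1.symm))
    exact hφf (t e) (Finset.mem_image_of_mem t he') hte
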